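/- Let I ⊂ ℝ be a bounded open interval and λ > π²/|I|². Then ∑_{k : λ_k(I)<λ} (λ − λ_k(I))^{1/2} ≥ (|I|/4)λ (1 − 2π/(|I|√λ) + π²/(|I|²λ)), where λ_k(I) = π²k²/|I|². -/

import Mathlib

open Real

lemma arcsin_le_tan_bound {y : ℝ} (h0 : 0 < y) (h1 : y < 1) :
    arcsin y ≤ y / Real.sqrt (1 - y ^ 2) := by
  rw [← Real.tan_arcsin]
  exact le_tan (Real.arcsin_nonneg.2 h0.le) (Real.arcsin_lt_pi_div_two.2 h1)

lemma arcsin_le_sub_sqrt {y : ℝ} (h0 : 0 ≤ y) (h1 : y ≤ 1) :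
    arcsin y ≤ π / 2 - Real.sqrt (2 * (1 - y)) := by
  set t := Real.sqrt (2 * (1 - y)) with ht
  have ht0 : 0 ≤ t := Real.sqrt_nonneg _
  have ht2 : t ^ 2 = 2 * (1 - y) := Real.sq_sqrt (by linarith)
  have htpi : t < π / 2 := by
    have h2 : t ≤ Real.sqrt 2 := by
      apply Real.sqrt_le_sqrt; linarith
    have : Real.sqrt 2 < 1.415 := by
      rw [show (1.415 : ℝ) = Real.sqrt (1.415 ^ 2) by rw [Real.sqrt_sq]; norm_num]
      apply Real.sqrt_lt_sqrt (by norm_num); norm_num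
    nlinarith [Real.pi_gt_d6]
  have hcos : y ≤ Real.cos t := by
    have := Real.one_sub_sq_div_two_le_cos (x := t)
    nlinarith
  calc arcsin y ≤ arcsin (Real.cos t) := Real.monotone_arcsin hcos
    _ = π / 2 - t := by
        rw [← Real.sin_pi_div_two_sub, Real.arcsin_sin] <;> nlinarith [Real.pi_gt_d6]

set_option maxHeartbeats 1000000 in
lemma circ_area_lower (μ : ℝ) (hμ : 1 < μ) :
    π / 4 * (μ - 1) ^ 2 ≤ π * μ ^ 2 / 4 - Real.sqrt (μ ^ 2 - 1) / 2
      - μ ^ 2 * arcsin (1 / μ) / 2 := by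
  have hμ0 : 0 < μ := by linarith
  have hπ0 : 0 < π := Real.pi_pos
  rcases le_total μ 2 with hμ2 | hμ2
  · -- 1 < μ ≤ 2 : use arcsin y ≤ π/2 - √(2(1-y))
    have harc : arcsin (1 / μ) ≤ π / 2 - Real.sqrt (2 * (1 - 1 / μ)) := by
      have h1 : (0:ℝ) ≤ 1 / μ := by positivity
      have h2 : 1 / μ ≤ 1 := by rw [div_le_one hμ0]; linarith
      exact arcsin_le_sub_sqrt h1 h2
    have hruw : Real.sqrt (μ ^ 2 - 1) = Real.sqrt (μ - 1) * Real.sqrt (μ + 1) := by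
      rw [← Real.sqrt_mul (by linarith)]
      congr 1; ring
    rw [hruw]
    obtain ⟨u, hu0, hu2⟩ : ∃ u : ℝ, 0 ≤ u ∧ u ^ 2 = μ - 1 :=
      ⟨Real.sqrt (μ - 1), Real.sqrt_nonneg _, Real.sq_sqrt (by linarith)⟩
    obtain ⟨w, hw0, hw2⟩ : ∃ w : ℝ, 0 ≤ w ∧ w ^ 2 = μ + 1 :=
      ⟨Real.sqrt (μ + 1), Real.sqrt_nonneg _, Real.sq_sqrt (by linarith)⟩
    obtain ⟨v, hv0, hv2⟩ : ∃ v : ℝ, 0 ≤ v ∧ v ^ 2 = 2 * (1 - 1 / μ) := by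
      refine ⟨Real.sqrt (2 * (1 - 1 / μ)), Real.sqrt_nonneg _, Real.sq_sqrt ?_⟩
      have : 1 / μ < 1 := by rw [div_lt_one hμ0]; linarith
      linarith
    rw [show Real.sqrt (μ - 1) = u by rw [← hu2, Real.sqrt_sq hu0],
      show Real.sqrt (μ + 1) = w by rw [← hw2, Real.sqrt_sq hw0]]
    rw [show Real.sqrt (2 * (1 - 1 / μ)) = v by rw [← hv2, Real.sqrt_sq hv0]] at harc
    have hu1 : u ≤ 1 := by nlinarith
    have hw' : w ≤ (μ + 14890/4000) / (33/10) := by nlinarith [sq_nonneg (w - 33/20)]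
    have hπu : π ≤ 31416/10000 := by nlinarith [Real.pi_lt_d6]
    have hμu : μ = 1 + u ^ 2 := by linarith
    have hkey : (μ + 1) + π * u ^ 3 * w + π ^ 2 / 4 * u ^ 6 ≤ 2 * μ ^ 3 := by
      have hu3 : (0:ℝ) ≤ u ^ 3 := by positivity
      have h1 : π * u ^ 3 * w ≤ (31416/10000) * u ^ 3 * ((μ + 14890/4000) / (33/10)) := by
        have hww : (0:ℝ) ≤ (μ + 14890/4000) / (33/10) := by linarith
        calc π * u ^ 3 * w ≤ π * u ^ 3 * ((μ + 14890/4000) / (33/10)) := by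
              apply mul_le_mul_of_nonneg_left hw' (by positivity)
          _ ≤ (31416/10000) * u ^ 3 * ((μ + 14890/4000) / (33/10)) := by
              apply mul_le_mul_of_nonneg_right _ hww
              apply mul_le_mul_of_nonneg_right hπu hu3
      have h2 : π ^ 2 / 4 * u ^ 6 ≤ (24675/10000) * u ^ 6 := by
        apply mul_le_mul_of_nonneg_right _ (by positivity)
        nlinarith [Real.pi_lt_d6, hπ0]
      have hpoly : (μ + 1) + (31416/10000) * u ^ 3 * ((μ + 14890/4000) / (33/10))
          + (24675/10000) * u ^ 6 ≤ 2 * μ ^ 3 := by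
        rw [hμu]
        nlinarith [mul_nonneg (mul_nonneg hu0 hu0) (sub_nonneg.2 hu1),
          mul_nonneg (mul_nonneg (mul_nonneg (mul_nonneg hu0 hu0) hu0) hu0) (sub_nonneg.2 hu1),
          mul_nonneg (mul_nonneg (mul_nonneg (mul_nonneg hu0 hu0) hu0) hu0)
            (by nlinarith : (0:ℝ) ≤ 1 - u ^ 2),
          sq_nonneg u, sq_nonneg (u * u)]
      linarith
    have hv2' : μ * v ^ 2 = 2 * (μ - 1) := by rw [hv2]; field_simp
    have ha2 : (μ ^ 2 * v) ^ 2 = 2 * μ ^ 3 * u ^ 2 := by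
      linear_combination μ ^ 3 * hv2' - 2 * μ ^ 3 * hu2
    have hb2 : (u * w + π / 2 * u ^ 4) ^ 2
        = u ^ 2 * ((μ + 1) + π * u ^ 3 * w + π ^ 2 / 4 * u ^ 6) := by
      linear_combination u ^ 2 * hw2
    have hA2 : (u * w + π / 2 * u ^ 4) ^ 2 ≤ (μ ^ 2 * v) ^ 2 := by
      rw [ha2, hb2]
      nlinarith [hkey, sq_nonneg u]
    have hA : u * w + π / 2 * u ^ 4 ≤ μ ^ 2 * v := by
      have ha0 : 0 ≤ μ ^ 2 * v := by positivity
      have hb0 : 0 ≤ u * w + π / 2 * u ^ 4 := by positivity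
      nlinarith [hA2, ha0, hb0]
    have hbd : μ ^ 2 * arcsin (1 / μ) / 2 ≤ μ ^ 2 * (π / 2 - v) / 2 := by
      have := mul_le_mul_of_nonneg_left harc (le_of_lt (by positivity : (0:ℝ) < μ ^ 2))
      linarith
    have hq : (μ - 1) ^ 2 = u ^ 4 := by rw [← hu2]; ring
    nlinarith [hA, hbd, hq]
  · -- μ ≥ 2 : use arcsin y ≤ tan bound
    obtain ⟨r, hr0, hr2, hrr⟩ : ∃ r : ℝ, 0 < r ∧ r ^ 2 = μ ^ 2 - 1
        ∧ Real.sqrt (μ ^ 2 - 1) = r := by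
      refine ⟨Real.sqrt (μ ^ 2 - 1), Real.sqrt_pos.2 (by nlinarith),
        Real.sq_sqrt (by nlinarith), rfl⟩
    rw [hrr]
    have hsmu : Real.sqrt (1 - (1 / μ) ^ 2) = r / μ := by
      rw [show 1 - (1 / μ) ^ 2 = (r / μ) ^ 2 by
        rw [div_pow, div_pow, hr2]; field_simp]
      exact Real.sqrt_sq (by positivity)
    have harc : arcsin (1 / μ) ≤ 1 / r := by
      have h := arcsin_le_tan_bound (y := 1 / μ) (by positivity)
        (by rw [div_lt_one hμ0]; linarith)
      rw [hsmu] at h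
      have heq : (1 / μ) / (r / μ) = 1 / r := by
        have hμne : μ ≠ 0 := ne_of_gt hμ0
        have hrne : r ≠ 0 := ne_of_gt hr0
        field_simp
      rwa [heq] at h
    have hπ2 : (98695/10000 : ℝ) < π ^ 2 := by nlinarith [Real.pi_gt_d6]
    have hsq : (2 * (2 * μ ^ 2 - 1)) ^ 2 ≤ (π * ((2 * μ - 1) * r)) ^ 2 := by
      have h1 : (0:ℝ) ≤ (2 * μ - 1) ^ 2 * (μ ^ 2 - 1) := by nlinarith
      have h2 : (0:ℝ) ≤ π ^ 2 - 98695/10000 := by linarith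
      have h3 : (π * ((2 * μ - 1) * r)) ^ 2 = π ^ 2 * ((2 * μ - 1) ^ 2 * (μ ^ 2 - 1)) := by
        linear_combination (π ^ 2 * (2 * μ - 1) ^ 2) * hr2
      rw [h3]
      nlinarith [mul_nonneg h2 h1, hμ2, sq_nonneg (μ - 2),
        mul_nonneg (mul_nonneg (sub_nonneg.2 hμ2) (sub_nonneg.2 hμ2)) (sub_nonneg.2 hμ2),
        mul_nonneg (mul_nonneg (mul_nonneg (sub_nonneg.2 hμ2) (sub_nonneg.2 hμ2))
          (sub_nonneg.2 hμ2)) (sub_nonneg.2 hμ2)]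
    have hub : 2 * (2 * μ ^ 2 - 1) ≤ π * ((2 * μ - 1) * r) := by
      have ha0 : 0 ≤ π * ((2 * μ - 1) * r) := by
        apply mul_nonneg Real.pi_pos.le
        apply mul_nonneg (by linarith) hr0.le
      nlinarith [hsq, ha0]
    have hfrac : μ ^ 2 * (1 / r) / 2 ≤ π * (2 * μ - 1) / 4 - r / 2 := by
      rw [show μ ^ 2 * (1 / r) / 2 = μ ^ 2 / (2 * r) by ring, div_le_iff₀ (by positivity)]
      nlinarith [hub, hr2]
    have hbd : μ ^ 2 * arcsin (1 / μ) / 2 ≤ μ ^ 2 * (1 / r) / 2 := by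
      have := mul_le_mul_of_nonneg_left harc (le_of_lt (by positivity : (0:ℝ) < μ ^ 2))
      linarith
    nlinarith [hfrac, hbd]

lemma integral_circ (μ : ℝ) (hμ : 1 < μ) :
    ∫ x in (1:ℝ)..μ, Real.sqrt (μ ^ 2 - x ^ 2)
      = π * μ ^ 2 / 4 - Real.sqrt (μ ^ 2 - 1) / 2 - μ ^ 2 * arcsin (1 / μ) / 2 := by
  have hμ0 : 0 < μ := by linarith
  set F : ℝ → ℝ := fun x => (x * Real.sqrt (μ ^ 2 - x ^ 2) + μ ^ 2 * arcsin (x / μ)) / 2 with hF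
  have hcontF : Continuous F := by
    apply Continuous.div_const
    apply Continuous.add
    · exact continuous_id.mul ((continuous_const.sub (continuous_pow 2)).sqrt)
    · exact continuous_const.mul (Real.continuous_arcsin.comp (continuous_id.div_const μ))
  have hderiv : ∀ x ∈ Set.Ioo (1:ℝ) μ,
      HasDerivWithinAt F (Real.sqrt (μ ^ 2 - x ^ 2)) (Set.Ioi x) x := by
    intro x hx
    obtain ⟨hx1, hxμ⟩ := hx
    have hx0 : 0 < x := by linarith
    have hpos : 0 < μ ^ 2 - x ^ 2 := by nlinarith
    set t := Real.sqrt (μ ^ 2 - x ^ 2) with htdef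
    have ht2 : t ^ 2 = μ ^ 2 - x ^ 2 := Real.sq_sqrt hpos.le
    have ht0 : 0 < t := Real.sqrt_pos.2 hpos
    have hs : Real.sqrt (1 - (x / μ) ^ 2) = t / μ := by
      rw [show 1 - (x / μ) ^ 2 = (t / μ) ^ 2 by
        rw [div_pow, div_pow, ht2]; field_simp]
      exact Real.sqrt_sq (by positivity)
    -- derivative of inner poly
    have h1 : HasDerivAt (fun y : ℝ => μ ^ 2 - y ^ 2) (-(2 * x)) x := by
      simpa using (hasDerivAt_pow 2 x).const_sub (μ ^ 2)
    have h2 : HasDerivAt (fun y : ℝ => Real.sqrt (μ ^ 2 - y ^ 2))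
        (1 / (2 * t) * (-(2 * x))) x := by
      exact (Real.hasDerivAt_sqrt (ne_of_gt hpos)).comp x h1
    have h3 : HasDerivAt (fun y : ℝ => y * Real.sqrt (μ ^ 2 - y ^ 2))
        (1 * t + x * (1 / (2 * t) * (-(2 * x)))) x := by
      exact (hasDerivAt_id x).mul h2
    have h4 : HasDerivAt (fun y : ℝ => y / μ) (1 / μ) x := by
      simpa using (hasDerivAt_id x).div_const μ
    have hne1 : x / μ ≠ -1 := by
      have : 0 < x / μ := by positivity
      linarith
    have hne2 : x / μ ≠ 1 := by
      have : x / μ < 1 := (div_lt_one hμ0).2 hxμ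
      linarith
    have h5 : HasDerivAt (fun y : ℝ => arcsin (y / μ))
        (1 / Real.sqrt (1 - (x / μ) ^ 2) * (1 / μ)) x :=
      by have := (Real.hasDerivAt_arcsin hne1 hne2).comp x h4; exact this
    have h6 : HasDerivAt F
        ((1 * t + x * (1 / (2 * t) * (-(2 * x))) + μ ^ 2 * (1 / Real.sqrt (1 - (x / μ) ^ 2) * (1 / μ))) / 2) x :=
      (h3.add (h5.const_mul (μ ^ 2))).div_const 2
    have heq : (1 * t + x * (1 / (2 * t) * (-(2 * x))) + μ ^ 2 * (1 / Real.sqrt (1 - (x / μ) ^ 2) * (1 / μ))) / 2 = t := by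
      rw [hs]
      field_simp
      linear_combination (-1) * ht2
    rw [← heq]
    exact h6.hasDerivWithinAt
  have hint : IntervalIntegrable (fun x => Real.sqrt (μ ^ 2 - x ^ 2)) MeasureTheory.volume 1 μ :=
    ((continuous_const.sub (continuous_pow 2)).sqrt).intervalIntegrable _ _
  have := intervalIntegral.integral_eq_sub_of_hasDeriv_right_of_le hμ.le
    hcontF.continuousOn hderiv hint
  rw [this, hF]
  have h01 : Real.sqrt (μ ^ 2 - μ ^ 2) = 0 := by simp
  simp only []
  rw [show μ ^ 2 - μ ^ 2 = 0 by ring, Real.sqrt_zero, div_self (ne_of_gt hμ0),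
    Real.arcsin_one, one_pow]
  ring

lemma sqrt_max_zero (a : ℝ) : Real.sqrt (max a 0) = Real.sqrt a := by
  rcases le_total a 0 with h | h
  · rw [max_eq_right h, Real.sqrt_zero, Real.sqrt_eq_zero_of_nonpos h]
  · rw [max_eq_left h]

lemma key_sum_lower (μ : ℝ) (hμ : 1 < μ) (N : ℕ) (hN : μ ≤ (N : ℝ) + 1) :
    π / 4 * (μ - 1) ^ 2
      ≤ ∑ k ∈ Finset.range N, Real.sqrt (max (μ ^ 2 - ((k : ℝ) + 1) ^ 2) 0) := by
  set f : ℝ → ℝ := fun x => Real.sqrt (μ ^ 2 - x ^ 2) with hf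
  have hcont : Continuous f := (continuous_const.sub (continuous_pow 2)).sqrt
  have hant : AntitoneOn f (Set.Icc (1:ℝ) (1 + N)) := by
    intro x hx y hy hxy
    apply Real.sqrt_le_sqrt
    nlinarith [hx.1, hxy]
  have hsum : (∫ x in (1:ℝ)..(1 + N : ℝ), f x) ≤ ∑ i ∈ Finset.range N, f (1 + i) :=
    hant.integral_le_sum
  have hN' : μ ≤ 1 + (N : ℝ) := by linarith
  have hsplit : ∫ x in (1:ℝ)..(1 + N : ℝ), f x
      = (∫ x in (1:ℝ)..μ, f x) + ∫ x in μ..(1 + N : ℝ), f x :=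
    (intervalIntegral.integral_add_adjacent_intervals
      (hcont.intervalIntegrable _ _) (hcont.intervalIntegrable _ _)).symm
  have hnn : 0 ≤ ∫ x in μ..(1 + N : ℝ), f x :=
    intervalIntegral.integral_nonneg hN' (fun x _ => Real.sqrt_nonneg _)
  have heqsum : ∑ i ∈ Finset.range N, f (1 + i)
      = ∑ k ∈ Finset.range N, Real.sqrt (max (μ ^ 2 - ((k : ℝ) + 1) ^ 2) 0) := by
    refine Finset.sum_congr rfl fun i _ => ?_
    rw [sqrt_max_zero, hf]
    ring_nf
  calc π / 4 * (μ - 1) ^ 2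
      ≤ ∫ x in (1:ℝ)..μ, f x := by rw [hf]; rw [integral_circ μ hμ]; exact circ_area_lower μ hμ
    _ ≤ ∫ x in (1:ℝ)..(1 + N : ℝ), f x := by rw [hsplit]; linarith
    _ ≤ ∑ i ∈ Finset.range N, f (1 + i) := hsum
    _ = _ := heqsum

/-- For a bounded open interval `I = (a,b)` of length `L = b - a`,
whose Dirichlet eigenvalues are exactly `λ_k = π²k²/L²` (k = 1, 2, …), and any
`Λ > π²/L²`:
`∑_{k : λ_k < Λ} (Λ - λ_k)^{1/2} ≥ (L/4)Λ(1 - 2π/(L√Λ) + π²/(L²Λ))`. -/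
theorem riesz_mean_half_interval_lower
    (a b : ℝ) (hab : a < b) (L : ℝ) (hL : L = b - a)
    (Λ : ℝ) (hΛ : π ^ 2 / L ^ 2 < Λ) :
    L / 4 * Λ * (1 - 2 * π / (L * Real.sqrt Λ) + π ^ 2 / (L ^ 2 * Λ)) ≤
      ∑' k : ℕ, Real.sqrt (max (Λ - π ^ 2 * ((k : ℝ) + 1) ^ 2 / L ^ 2) 0) := by
  have hL0 : 0 < L := by rw [hL]; linarith
  have hπ0 : 0 < π := Real.pi_pos
  have hΛ0 : 0 < Λ := lt_trans (by positivity) hΛ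
  have hs0 : 0 < Real.sqrt Λ := Real.sqrt_pos.2 hΛ0
  have hs2 : Real.sqrt Λ ^ 2 = Λ := Real.sq_sqrt hΛ0.le
  set μ := L * Real.sqrt Λ / π with hμdef
  have hπL : π < L * Real.sqrt Λ := by
    have h1 : π ^ 2 < Λ * L ^ 2 := by
      rw [div_lt_iff₀ (by positivity)] at hΛ; linarith
    nlinarith [mul_pos hL0 hs0]
  have hμ1 : 1 < μ := by
    rw [hμdef, lt_div_iff₀ hπ0]; linarith
  have hμsq : μ ^ 2 = L ^ 2 * Λ / π ^ 2 := by
    rw [hμdef, div_pow, mul_pow, hs2]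
  have hterm : ∀ k : ℕ, Real.sqrt (max (Λ - π ^ 2 * ((k : ℝ) + 1) ^ 2 / L ^ 2) 0)
      = π / L * Real.sqrt (max (μ ^ 2 - ((k : ℝ) + 1) ^ 2) 0) := by
    intro k
    set j : ℝ := (k : ℝ) + 1
    have hc : Λ - π ^ 2 * j ^ 2 / L ^ 2 = (π / L) ^ 2 * (μ ^ 2 - j ^ 2) := by
      rw [hμsq]; field_simp
    rw [sqrt_max_zero, sqrt_max_zero, hc, Real.sqrt_mul (by positivity),
      Real.sqrt_sq (by positivity)]
  set N := ⌈μ⌉₊ with hNdef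
  have hμN : μ ≤ (N : ℝ) := Nat.le_ceil μ
  have hzero : ∀ k ∉ Finset.range N,
      Real.sqrt (max (Λ - π ^ 2 * ((k : ℝ) + 1) ^ 2 / L ^ 2) 0) = 0 := by
    intro k hk
    rw [Finset.mem_range, not_lt] at hk
    have hkN : (N : ℝ) ≤ (k : ℝ) := by exact_mod_cast hk
    rw [hterm k]
    have : max (μ ^ 2 - ((k : ℝ) + 1) ^ 2) 0 = 0 := by
      apply max_eq_right
      nlinarith [hμN, hkN, hμ1]
    rw [this, Real.sqrt_zero, mul_zero]
  rw [tsum_eq_sum hzero]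
  have hsum_eq : ∑ k ∈ Finset.range N, Real.sqrt (max (Λ - π ^ 2 * ((k : ℝ) + 1) ^ 2 / L ^ 2) 0)
      = π / L * ∑ k ∈ Finset.range N, Real.sqrt (max (μ ^ 2 - ((k : ℝ) + 1) ^ 2) 0) := by
    rw [Finset.mul_sum]
    exact Finset.sum_congr rfl fun k _ => hterm k
  rw [hsum_eq]
  have hkey := key_sum_lower μ hμ1 N (by linarith)
  have hgen : ∀ s : ℝ, 0 < s → Λ = s ^ 2 →
      L / 4 * Λ * (1 - 2 * π / (L * s) + π ^ 2 / (L ^ 2 * Λ))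
        = π / L * (π / 4 * (L * s / π - 1) ^ 2) := by
    intro s hs hΛs
    subst hΛs
    field_simp
    ring
  have hLHS := hgen (Real.sqrt Λ) hs0 hs2.symm
  rw [hμdef] at hkey
  rw [hLHS]
  exact mul_le_mul_of_nonneg_left hkey (by positivity)
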